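/- The normal form e of nilpotent orbit №93 can be moved by a general linear transformation onto the lowering element f̃ of orbit №94: there exists g ∈ GL₈(ℂ) such that (Λ⁴g)(e) = f̃, where e = e₂∧e₃∧e₄∧e₅ + e₁∧e₃∧e₅∧e₆ + e₁∧e₄∧e₅∧e₇ + e₁∧e₂∧e₆∧e₇ + e₁∧e₃∧e₄∧e₈ + e₁∧e₂∧e₅∧e₈ and f̃ = 3·e₄∧e₅∧e₆∧e₇ − e₂∧e₄∧e₅∧e₈ − e₃∧e₄∧e₆∧e₈ + 3·e₁∧e₅∧e₆∧e₈ + 4·e₂∧e₃∧e₇∧e₈ + e₁∧e₄∧e₇∧e₈. -/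

import Mathlib

/-!
Common setup: the ℤ/2-graded Lie algebra 𝔤 = 𝔰𝔩(V) ⊕ Λ⁴V for V = ℂ⁸,
following Antonyan.  Four-vectors are modeled as alternating 4-tensors in
⊗⁴V, i.e. functions `(Fin 4 → Fin 8) → ℂ`, via the embedding
`v₁∧v₂∧v₃∧v₄ = Σ_σ sgn σ · v_{σ(1)}⊗v_{σ(2)}⊗v_{σ(3)}⊗v_{σ(4)}`.
(All indices are shifted from `1,…,8` to `0,…,7`.)
-/

noncomputable section

open scoped BigOperators

/-- `𝔤𝔩₈(ℂ)`, as 8×8 complex matrices. -/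
abbrev gl8 : Type := Matrix (Fin 8) (Fin 8) ℂ

/-- Coordinates of an element of `⊗⁴ ℂ⁸`. -/
abbrev T4 : Type := (Fin 4 → Fin 8) → ℂ

/-- The sign of a permutation, as a complex number. -/
def sgn {n : ℕ} (σ : Equiv.Perm (Fin n)) : ℂ := ((Equiv.Perm.sign σ : ℤ) : ℂ)

/-- A 4-tensor is alternating, i.e. lies in the image of `Λ⁴V ⊂ ⊗⁴V`. -/
def IsAlt (T : T4) : Prop :=
  ∀ (σ : Equiv.Perm (Fin 4)) (v : Fin 4 → Fin 8), T (v ∘ σ) = sgn σ * T v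

/-- The determinant form `δ ∈ Λ⁸V*` with `δ(e₁,…,e₈) = 1`:
`delta8 f = δ_{f(1)…f(8)}`. -/
def delta8 (f : Fin 8 → Fin 8) : ℂ :=
  Matrix.det (Matrix.of fun i j : Fin 8 => if f j = i then (1 : ℂ) else 0)

/-- The bracket on `𝔤₀ = 𝔰𝔩(V)`: the commutator of matrices. -/
def br00 (A B : gl8) : gl8 := A * B - B * A

/-- The bracket `[A,T]` of `A ∈ 𝔤₀` with `T ∈ 𝔤₁ = Λ⁴V`: the derivation
action `[A,T]^{ijkl} = A^i_s T^{sjkl} + A^j_s T^{iskl} + A^k_s T^{ijsl} + A^l_s T^{ijks}`. -/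
def br01 (A : gl8) (T : T4) : T4 :=
  fun v => ∑ a : Fin 4, ∑ s : Fin 8, A (v a) s * T (Function.update v a s)

/-- The bracket of two four-vectors,
`[T₁,T₂]^k_m = −(1/288) δ_{p₁q₁r₁s₁p₂q₂r₂m}(T₁^{p₁q₁r₁s₁}T₂^{p₂q₂r₂k} − T₂^{p₁q₁r₁s₁}T₁^{p₂q₂r₂k})`
(summation over the repeated indices `p₁,q₁,r₁,s₁,p₂,q₂,r₂`). -/
def br11 (T₁ T₂ : T4) : gl8 :=
  Matrix.of fun k m : Fin 8 =>
    -(1 / 288 : ℂ) * ∑ f : Fin 7 → Fin 8,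
      delta8 (Fin.snoc f m) *
        (T₁ (fun a : Fin 4 => f (Fin.castAdd 3 a)) *
            T₂ (Fin.snoc (fun b : Fin 3 => f (Fin.natAdd 4 b)) k) -
          T₂ (fun a : Fin 4 => f (Fin.castAdd 3 a)) *
            T₁ (Fin.snoc (fun b : Fin 3 => f (Fin.natAdd 4 b)) k))

/-- The bracket on (the ambient space of) `𝔤 = 𝔰𝔩(V) ⊕ Λ⁴V`, an element of
which is represented as a pair `(A, T)` with `A` a matrix and `T` a 4-tensor. -/
def gBracket (x y : gl8 × T4) : gl8 × T4 :=
  (br00 x.1 y.1 + br11 x.2 y.2, br01 x.1 y.2 - br01 y.1 x.2)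

/-- The subspace `𝔤 = 𝔰𝔩(V) ⊕ Λ⁴V` of the ambient space `𝔤𝔩(V) × ⊗⁴V`:
traceless first component and alternating second component. -/
def gSub : Submodule ℂ (gl8 × T4) where
  carrier := {x | Matrix.trace x.1 = 0 ∧ IsAlt x.2}
  add_mem' := by
    rintro x y ⟨hx1, hx2⟩ ⟨hy1, hy2⟩
    refine ⟨by simp [Matrix.trace_add, hx1, hy1], fun σ v => ?_⟩
    simp only [Prod.snd_add, Pi.add_apply]
    rw [hx2 σ v, hy2 σ v]; ring
  zero_mem' := ⟨by simp, fun σ v => by simp⟩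
  smul_mem' := by
    rintro c x ⟨hx1, hx2⟩
    refine ⟨by simp [Matrix.trace_smul, hx1], fun σ v => ?_⟩
    simp only [Prod.smul_snd, Pi.smul_apply, smul_eq_mul]
    rw [hx2 σ v]; ring

/-- The adjoint action of a four-vector `t ∈ 𝔤₁` on `𝔤`. -/
def adT (t : T4) : gl8 × T4 → gl8 × T4 := fun y => gBracket ((0 : gl8), t) y

/-- The adjoint action of a matrix `A ∈ 𝔤₀` on `𝔤`. -/
def adM (A : gl8) : gl8 × T4 → gl8 × T4 := fun y => gBracket (A, (0 : T4)) y

/-- A four-vector `t` is a nilpotent element of `𝔤`: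
`ad t : 𝔤 → 𝔤` is a nilpotent endomorphism. -/
def IsNilpotentFour (t : T4) : Prop :=
  ∃ n : ℕ, ∀ y ∈ gSub, (adT t)^[n] y = 0

/-- A four-vector `t` is a semisimple element of `𝔤`: `ad t : 𝔤 → 𝔤` is a
diagonalizable endomorphism, i.e. `𝔤` is spanned by eigenvectors of `ad t`. -/
def IsSemisimpleFour (t : T4) : Prop :=
  ∃ (n : ℕ) (v : Fin n → gl8 × T4) (μ : Fin n → ℂ),
    (∀ i, v i ∈ gSub) ∧ Submodule.span ℂ (Set.range v) = gSub ∧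
      ∀ i, adT t (v i) = μ i • v i

/-- A matrix `A ∈ 𝔤₀` is a semisimple element of `𝔤`: `ad A : 𝔤 → 𝔤` is a
diagonalizable endomorphism. -/
def IsSemisimpleMat (A : gl8) : Prop :=
  ∃ (n : ℕ) (v : Fin n → gl8 × T4) (μ : Fin n → ℂ),
    (∀ i, v i ∈ gSub) ∧ Submodule.span ℂ (Set.range v) = gSub ∧
      ∀ i, adM A (v i) = μ i • v i

/-- The four-vector `e_{w(1)} ∧ e_{w(2)} ∧ e_{w(3)} ∧ e_{w(4)}`, as an
alternating 4-tensor. -/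
def wedge4 (w : Fin 4 → Fin 8) : T4 :=
  fun v => Matrix.det (Matrix.of fun a b : Fin 4 => if w a = v b then (1 : ℂ) else 0)

/-- The semisimple four-vector `p(s)` associated to a permutation `s` of the
eight indices. -/
def pvec (s : Equiv.Perm (Fin 8)) : T4 :=
  wedge4 (fun a : Fin 4 => s (Fin.castAdd 4 a)) +
    wedge4 (fun a : Fin 4 => s (Fin.natAdd 4 a))

/-- Antonyan's seven four-vectors `p₁,…,p₇` (with indices shifted to `0,…,7`):
`p₁ = p(1234 5678)`, `p₂ = p(1357 6824)`, `p₃ = p(1562 8437)`, `p₄ = p(1683 4752)`,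
`p₅ = p(1845 7263)`, `p₆ = p(1476 2385)`, `p₇ = p(1728 3546)`. -/
def P : Fin 7 → T4 :=
  ![wedge4 ![0, 1, 2, 3] + wedge4 ![4, 5, 6, 7],
    wedge4 ![0, 2, 4, 6] + wedge4 ![5, 7, 1, 3],
    wedge4 ![0, 4, 5, 1] + wedge4 ![7, 3, 2, 6],
    wedge4 ![0, 5, 7, 2] + wedge4 ![3, 6, 4, 1],
    wedge4 ![0, 7, 3, 4] + wedge4 ![6, 1, 5, 2],
    wedge4 ![0, 3, 6, 5] + wedge4 ![1, 2, 7, 4],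
    wedge4 ![0, 6, 1, 7] + wedge4 ![2, 4, 3, 5]]

/-- The Cartan subspace `𝔠 = span(p₁,…,p₇) ⊂ Λ⁴V`. -/
def cSpan : Submodule ℂ T4 := Submodule.span ℂ (Set.range P)

/-- The Cartan subspace `𝔠`, viewed inside `𝔤`. -/
def cG : Submodule ℂ (gl8 × T4) :=
  Submodule.span ℂ (Set.range fun i : Fin 7 => (((0 : gl8), P i) : gl8 × T4))

/-- The natural action of `g ∈ GL(V)` on `⊗⁴V` (restricting to `Λ⁴g` on `Λ⁴V`). -/
def gact (g : gl8) (T : T4) : T4 :=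
  fun v => ∑ w : Fin 4 → Fin 8, (∏ a : Fin 4, g (v a) (w a)) * T w

abbrev SL8 := Matrix.SpecialLinearGroup (Fin 8) ℂ

/-- The subspace of alternating 4-tensors, i.e. `Λ⁴V ⊂ ⊗⁴V`. -/
def AltSub : Submodule ℂ T4 where
  carrier := {T | IsAlt T}
  add_mem' := by
    intro S T hS hT σ v
    simp only [Pi.add_apply]
    rw [hS σ v, hT σ v]; ring
  zero_mem' := fun σ v => by simp
  smul_mem' := by
    intro c S hS σ v
    simp only [Pi.smul_apply, smul_eq_mul]
    rw [hS σ v]; ring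

/-- The diagonal traceless matrices, viewed inside `𝔤`. -/
def dG : Submodule ℂ (gl8 × T4) where
  carrier := {x | (∀ i j : Fin 8, i ≠ j → x.1 i j = 0) ∧ Matrix.trace x.1 = 0 ∧ x.2 = 0}
  add_mem' := by
    rintro x y ⟨hx0, hx1, hx2⟩ ⟨hy0, hy1, hy2⟩
    refine ⟨fun i j hij => ?_, ?_, ?_⟩
    · simp [Matrix.add_apply, hx0 i j hij, hy0 i j hij]
    · simp [Matrix.trace_add, hx1, hy1]
    · simp [hx2, hy2]
  zero_mem' := ⟨fun i j _ => rfl, by simp, rfl⟩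
  smul_mem' := by
    rintro c x ⟨hx0, hx1, hx2⟩
    refine ⟨fun i j hij => ?_, ?_, ?_⟩
    · simp [Matrix.smul_apply, hx0 i j hij]
    · simp [Matrix.trace_smul, hx1]
    · simp [hx2]

/-- A Cartan subspace of `𝔤₁ = Λ⁴V`: a maximal linear subspace of `Λ⁴V`
consisting of pairwise commuting semisimple elements of `𝔤`. -/
def IsCartanSubspace (c : Submodule ℂ T4) : Prop :=
  c ≤ AltSub ∧ (∀ x ∈ c, IsSemisimpleFour x) ∧ (∀ x ∈ c, ∀ y ∈ c, br11 x y = 0) ∧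
    ∀ c' : Submodule ℂ T4, c' ≤ AltSub → (∀ x ∈ c', IsSemisimpleFour x) →
      (∀ x ∈ c', ∀ y ∈ c', br11 x y = 0) → c ≤ c' → c' = c

/-- The traceless matrices `𝔰𝔩₈(ℂ)`, as the kernel of the trace. -/
def trKer : Submodule ℂ gl8 := LinearMap.ker (Matrix.traceLinearMap (Fin 8) ℂ ℂ)

/-- The derivation action `X ↦ X·T` on a fixed 4-tensor `T`, as a linear map in `X`. -/
def actL (T : T4) : gl8 →ₗ[ℂ] T4 where
  toFun X := br01 X T
  map_add' X Y := by
    funext v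
    simp [br01, Matrix.add_apply, add_mul, Finset.sum_add_distrib]
  map_smul' c X := by
    funext v
    simp [br01, Matrix.smul_apply, smul_eq_mul, Finset.mul_sum, mul_assoc]

abbrev T2 : Type := (Fin 2 → Fin 8) → ℂ

/-- The bivector `e_i ∧ e_j = e_i ⊗ e_j − e_j ⊗ e_i`, in coordinates. -/
def wedge2 (i j : Fin 8) : T2 :=
  fun v => (if v 0 = i ∧ v 1 = j then (1 : ℂ) else 0) - (if v 0 = j ∧ v 1 = i then 1 else 0)

/-- The wedge product `Λ²V × Λ²V → Λ⁴V ⊂ ⊗⁴V`, in coordinates (for the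
embedding convention `v₁∧…∧v₄ = Σ_σ sgn σ v_{σ(1)}⊗…⊗v_{σ(4)}`). -/
def wedge22 (S T : T2) : T4 :=
  fun v => (4 : ℂ)⁻¹ * ∑ σ : Equiv.Perm (Fin 4),
    sgn σ * (S (fun a : Fin 2 => v (σ (Fin.castAdd 2 a))) *
      T (fun a : Fin 2 => v (σ (Fin.natAdd 2 a))))

/-- The nondegenerate bivector `ω = e₁∧e₂ + e₃∧e₄ + e₅∧e₆ + e₇∧e₈`. -/
def omega2 : T2 := wedge2 0 1 + wedge2 2 3 + wedge2 4 5 + wedge2 6 7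

/-- The four-vector `ω ∧ ω`. -/
def omegaSq : T4 := wedge22 omega2 omega2

/-- The matrix of the skew form `B = e¹∧e² + e³∧e⁴ + e⁵∧e⁶ + e⁷∧e⁸`. -/
def Bmat : gl8 :=
  Matrix.of fun i j : Fin 8 =>
    if (i : ℕ) % 2 = 0 ∧ (j : ℕ) = (i : ℕ) + 1 then (1 : ℂ)
    else if (j : ℕ) % 2 = 0 ∧ (i : ℕ) = (j : ℕ) + 1 then -1 else 0

/-- The semisimple four-vector `p₁ = e₁∧e₂∧e₃∧e₄ + e₅∧e₆∧e₇∧e₈`. -/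
def p1four : T4 := wedge4 ![0, 1, 2, 3] + wedge4 ![4, 5, 6, 7]

/-- The normal form `e` of nilpotent orbit №93 (indices shifted to `0,…,7`). -/
def e93 : T4 :=
  wedge4 ![1, 2, 3, 4] + wedge4 ![0, 2, 4, 5] + wedge4 ![0, 3, 4, 6] +
    wedge4 ![0, 1, 5, 6] + wedge4 ![0, 2, 3, 7] + wedge4 ![0, 1, 4, 7]

/-- The lowering element `f̃` of orbit №94 (indices shifted to `0,…,7`). -/
def f94 : T4 :=
  (3 : ℂ) • wedge4 ![3, 4, 5, 6] - wedge4 ![1, 3, 4, 7] - wedge4 ![2, 3, 5, 7] +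
    (3 : ℂ) • wedge4 ![0, 4, 5, 7] + (4 : ℂ) • wedge4 ![1, 2, 6, 7] +
    wedge4 ![0, 3, 6, 7]

/-- Diagonal values of the transforming matrix. -/
def dval : Fin 8 → ℂ := ![12, -4, -12, 1, 3, 1, 1, (12 : ℂ)⁻¹]

lemma dval_ne_zero (i : Fin 8) : dval i ≠ 0 := by
  fin_cases i <;> norm_num [dval]

/-- The anti-diagonal transforming matrix. -/
def gmat : gl8 := Matrix.of fun i j => if j = Fin.rev i then dval i else 0

/-- Its inverse. -/
def gmat' : gl8 := Matrix.of fun i j => if j = Fin.rev i then (dval j)⁻¹ else 0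

lemma gmat_mul_gmat' : gmat * gmat' = 1 := by
  ext i k
  rw [Matrix.mul_apply, Finset.sum_eq_single (Fin.rev i)]
  · simp only [gmat, gmat', Matrix.of_apply, if_pos rfl, Fin.rev_rev]
    by_cases h : k = i
    · subst h
      simp [mul_inv_cancel₀ (dval_ne_zero k), Matrix.one_apply]
    · simp [h, Matrix.one_apply, Ne.symm h]
  · intro j _ hj
    simp [gmat, Matrix.of_apply, if_neg hj]
  · intro h; exact absurd (Finset.mem_univ _) h

lemma gmat'_mul_gmat : gmat' * gmat = 1 := by
  ext i k
  rw [Matrix.mul_apply, Finset.sum_eq_single (Fin.rev i)]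
  · simp only [gmat, gmat', Matrix.of_apply, if_pos rfl, Fin.rev_rev]
    by_cases h : k = i
    · subst h
      simp [inv_mul_cancel₀ (dval_ne_zero (Fin.rev k)), Matrix.one_apply]
    · simp [h, Matrix.one_apply, Ne.symm h]
  · intro j _ hj
    simp [gmat', Matrix.of_apply, if_neg hj]
  · intro h; exact absurd (Finset.mem_univ _) h

/-- The action of the anti-diagonal matrix collapses to a single term. -/
lemma gact_gmat (T : T4) :
    gact gmat T = fun v => (∏ a, dval (v a)) * T (fun a => Fin.rev (v a)) := by
  funext v
  rw [gact, Finset.sum_eq_single (fun a => Fin.rev (v a))]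
  · congr 1
    exact Finset.prod_congr rfl fun a _ => by simp [gmat]
  · intro w _ hw
    obtain ⟨a, ha⟩ := Function.ne_iff.mp hw
    have h0 : gmat (v a) (w a) = 0 := by simp [gmat, if_neg ha]
    rw [Finset.prod_eq_zero (Finset.mem_univ a) h0, zero_mul]
  · intro h; exact absurd (Finset.mem_univ _) h

lemma wedge4_rev_arg (w : Fin 4 → Fin 8) (v : Fin 4 → Fin 8) :
    wedge4 w (fun a => Fin.rev (v a)) = wedge4 (fun a => Fin.rev (w a)) v := by
  unfold wedge4
  congr 1
  ext a b
  simp only [Matrix.of_apply]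
  congr 1
  apply propext
  constructor
  · intro h; rw [h, Fin.rev_rev]
  · intro h; rw [← h, Fin.rev_rev]

/-- Reversing the order of the four factors does not change the wedge. -/
lemma wedge4_comp_rev (w : Fin 4 → Fin 8) :
    wedge4 (fun a => w (Fin.rev a)) = wedge4 w := by
  funext v
  unfold wedge4
  have : (Matrix.of fun a b : Fin 4 => if w (Fin.rev a) = v b then (1 : ℂ) else 0) =
      (Matrix.of fun a b : Fin 4 => if w a = v b then (1 : ℂ) else 0).submatrix
        (Fin.revPerm : Equiv.Perm (Fin 4)) id := rfl
  rw [this, Matrix.det_permute]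
  have hsgn : Equiv.Perm.sign (Fin.revPerm : Equiv.Perm (Fin 4)) = 1 := by decide
  rw [hsgn]
  simp

/-- Transfer the product of diagonal values from the argument to the wedge indices. -/
lemma prod_dval_wedge4 (u : Fin 4 → Fin 8) (v : Fin 4 → Fin 8) :
    (∏ b, dval (v b)) * wedge4 u v = (∏ a, dval (u a)) * wedge4 u v := by
  unfold wedge4
  rw [← Matrix.det_mul_row (fun b => dval (v b)), ← Matrix.det_mul_column (fun a => dval (u a))]
  congr 1
  ext a b
  simp only [Matrix.of_apply]
  by_cases h : u a = v b
  · rw [h]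
  · simp [h]

/-- There is `g ∈ GL₈(ℂ)` with `(Λ⁴g)(e) = f̃`. -/
theorem statement19 :
    ∃ g : Matrix.GeneralLinearGroup (Fin 8) ℂ, gact (g : gl8) e93 = f94 := by
  refine ⟨⟨gmat, gmat', gmat_mul_gmat', gmat'_mul_gmat⟩, ?_⟩
  show gact gmat e93 = f94
  rw [gact_gmat]
  funext v
  have h1 : (fun a => Fin.rev ((![1,2,3,4] : Fin 4 → Fin 8) a)) =
      (fun a => (![3,4,5,6] : Fin 4 → Fin 8) (Fin.rev a)) := by
    funext a; fin_cases a <;> rfl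
  have h2 : (fun a => Fin.rev ((![0,2,4,5] : Fin 4 → Fin 8) a)) =
      (fun a => (![2,3,5,7] : Fin 4 → Fin 8) (Fin.rev a)) := by
    funext a; fin_cases a <;> rfl
  have h3 : (fun a => Fin.rev ((![0,3,4,6] : Fin 4 → Fin 8) a)) =
      (fun a => (![1,3,4,7] : Fin 4 → Fin 8) (Fin.rev a)) := by
    funext a; fin_cases a <;> rfl
  have h4 : (fun a => Fin.rev ((![0,1,5,6] : Fin 4 → Fin 8) a)) =
      (fun a => (![1,2,6,7] : Fin 4 → Fin 8) (Fin.rev a)) := by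
    funext a; fin_cases a <;> rfl
  have h5 : (fun a => Fin.rev ((![0,2,3,7] : Fin 4 → Fin 8) a)) =
      (fun a => (![0,4,5,7] : Fin 4 → Fin 8) (Fin.rev a)) := by
    funext a; fin_cases a <;> rfl
  have h6 : (fun a => Fin.rev ((![0,1,4,7] : Fin 4 → Fin 8) a)) =
      (fun a => (![0,3,6,7] : Fin 4 → Fin 8) (Fin.rev a)) := by
    funext a; fin_cases a <;> rfl
  have e93ap : e93 (fun a => Fin.rev (v a)) =
      wedge4 ![3,4,5,6] v + wedge4 ![2,3,5,7] v + wedge4 ![1,3,4,7] v +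
        wedge4 ![1,2,6,7] v + wedge4 ![0,4,5,7] v + wedge4 ![0,3,6,7] v := by
    show (wedge4 ![1, 2, 3, 4] + wedge4 ![0, 2, 4, 5] + wedge4 ![0, 3, 4, 6] +
      wedge4 ![0, 1, 5, 6] + wedge4 ![0, 2, 3, 7] + wedge4 ![0, 1, 4, 7])
        (fun a => Fin.rev (v a)) = _
    simp only [Pi.add_apply]
    rw [wedge4_rev_arg, wedge4_rev_arg, wedge4_rev_arg, wedge4_rev_arg,
      wedge4_rev_arg, wedge4_rev_arg, h1, h2, h3, h4, h5, h6,
      wedge4_comp_rev, wedge4_comp_rev, wedge4_comp_rev, wedge4_comp_rev,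
      wedge4_comp_rev, wedge4_comp_rev]
  rw [e93ap]
  have key : ∀ u : Fin 4 → Fin 8,
      (∏ a, dval (v a)) * wedge4 u v = (dval (u 0) * dval (u 1) * dval (u 2) * dval (u 3)) *
        wedge4 u v := by
    intro u
    rw [prod_dval_wedge4, Fin.prod_univ_four]
  rw [mul_add, mul_add, mul_add, mul_add, mul_add, key, key, key, key, key, key]
  show _ = ((3 : ℂ) • wedge4 ![3, 4, 5, 6] - wedge4 ![1, 3, 4, 7] - wedge4 ![2, 3, 5, 7] +
    (3 : ℂ) • wedge4 ![0, 4, 5, 7] + (4 : ℂ) • wedge4 ![1, 2, 6, 7] +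
    wedge4 ![0, 3, 6, 7]) v
  simp only [Pi.add_apply, Pi.sub_apply, Pi.smul_apply, smul_eq_mul, Matrix.cons_val]
  norm_num [show dval 0 = 12 from rfl, show dval 1 = -4 from rfl,
    show dval 2 = -12 from rfl, show dval 3 = 1 from rfl, show dval 4 = 3 from rfl,
    show dval 5 = 1 from rfl, show dval 6 = 1 from rfl, show dval 7 = (12 : ℂ)⁻¹ from rfl]
  ring


end
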